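/- Let p*, p be probability distributions on a finite set A, let 0 < β < 1, and let p̂ = (1−β)p + β·Unif(A). Then KL(p*‖p̂) − KL(p*‖p) ≤ β/(1−β). -/

import Mathlib

open Finset

/-- For probability distributions `p*`, `p` on a nonempty finite set `A` with `p` everywhere
positive, `0 < β < 1`, and `p̂ = (1 - β) p + β · Unif(A)`, one has
`KL(p* ‖ p̂) - KL(p* ‖ p) ≤ β / (1 - β)`. -/
theorem kl_mixture_diff_le {A : Type*} [Fintype A] [Nonempty A]
    (pstar p : A → ℝ) (hps : ∀ a, 0 ≤ pstar a) (hp : ∀ a, 0 < p a)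
    (hpssum : ∑ a, pstar a = 1) (hpsum : ∑ a, p a = 1)
    (β : ℝ) (hβ0 : 0 < β) (hβ1 : β < 1) :
    (∑ a, pstar a * Real.log (pstar a / ((1 - β) * p a + β / (Fintype.card A))))
      - (∑ a, pstar a * Real.log (pstar a / p a))
      ≤ β / (1 - β) := by
  have h1β : (0:ℝ) < 1 - β := by linarith
  have hcard : (0:ℝ) < Fintype.card A := by
    exact_mod_cast Fintype.card_pos
  set c : ℝ := Real.log (1 / (1 - β)) with hc
  have key : ∀ a, pstar a * Real.log (pstar a / ((1 - β) * p a + β / (Fintype.card A)))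
      - pstar a * Real.log (pstar a / p a) ≤ pstar a * c := by
    intro a
    rcases eq_or_lt_of_le (hps a) with h | h
    · simp [← h]
    · have hq : (0:ℝ) < (1 - β) * p a + β / (Fintype.card A) :=
        add_pos (mul_pos h1β (hp a)) (div_pos hβ0 hcard)
      rw [Real.log_div (ne_of_gt h) (ne_of_gt hq), Real.log_div (ne_of_gt h) (ne_of_gt (hp a))]
      have hlog : Real.log (p a) - Real.log ((1 - β) * p a + β / (Fintype.card A)) ≤ c := by
        rw [← Real.log_div (ne_of_gt (hp a)) (ne_of_gt hq), hc]
        apply Real.log_le_log (div_pos (hp a) hq)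
        rw [div_le_div_iff₀ hq h1β]
        have : (0:ℝ) ≤ β / (Fintype.card A) := by positivity
        nlinarith [hp a]
      nlinarith [hlog]
  calc (∑ a, pstar a * Real.log (pstar a / ((1 - β) * p a + β / (Fintype.card A))))
      - (∑ a, pstar a * Real.log (pstar a / p a))
      = ∑ a, (pstar a * Real.log (pstar a / ((1 - β) * p a + β / (Fintype.card A)))
          - pstar a * Real.log (pstar a / p a)) := by rw [Finset.sum_sub_distrib]
    _ ≤ ∑ a, pstar a * c := Finset.sum_le_sum fun a _ => key a
    _ = c := by rw [← Finset.sum_mul, hpssum, one_mul]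
    _ ≤ 1 / (1 - β) - 1 := Real.log_le_sub_one_of_pos (by positivity)
    _ = β / (1 - β) := by field_simp; ring
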